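/- Let X be a submetrizable topological space, and let 𝓤 be a σ-discrete collection of cozero subsets of X (i.e., 𝓤 = ⋃_{n∈ℕ} 𝓤_n where each 𝓤_n is a discrete family). Then there exist a metrizable topological space M and a continuous injective map f : X → M such that f[U] is open in M for every U ∈ 𝓤. -/

import Mathlib

open Set Topology

/-- A (set-indexed) family of sets is discrete (w.r.t. an explicit topology `t`) if every point
has a neighborhood meeting at most one member of the family. -/
def DiscreteSetFamily {X : Type*} (t : TopologicalSpace X) (F : Set (Set X)) : Prop :=
  ∀ x : X, ∃ U ∈ @nhds X t x, {C ∈ F | (C ∩ U).Nonempty}.Subsingleton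

/-- A topology `t` is submetrizable if there is a coarser metrizable topology. -/
def Submetrizable {X : Type*} (t : TopologicalSpace X) : Prop :=
  ∃ s : TopologicalSpace X, (∀ U, s.IsOpen U → t.IsOpen U) ∧
    @TopologicalSpace.MetrizableSpace X s

/-- A cozero set: the preimage of `(0,1]` under a continuous function into `[0,1]`. -/
def IsCozero {X : Type*} [TopologicalSpace X] (U : Set X) : Prop :=
  ∃ g : X → ℝ, Continuous g ∧ range g ⊆ Icc 0 1 ∧ U = g ⁻¹' Ioc 0 1

set_option maxHeartbeats 1000000
set_option synthInstance.maxHeartbeats 400000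

/-- A copy of a type, used to carry a different topology. -/
structure SubmetCopy (X : Type u) : Type u where
  val : X

/-- Auxiliary embedding lemma: a countable family of continuous maps into metrizable
spaces, one of which is injective, yields a continuous injective map into a metrizable
space which is open on all preimages of open sets under the family. -/
lemma aux_embed {X : Type u} [tX : TopologicalSpace X] (E : ℕ → Type u)
    [∀ n, TopologicalSpace (E n)] [∀ n, TopologicalSpace.MetrizableSpace (E n)]
    (f : ∀ n, X → E n) (hf : ∀ n, Continuous (f n))
    (hinj : Function.Injective (f 0)) :
    ∃ (M : Type u) (tM : TopologicalSpace M), @TopologicalSpace.MetrizableSpace M tM ∧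
      ∃ F : X → M, @Continuous _ _ tX tM F ∧ Function.Injective F ∧
        ∀ (S : Set X), (∃ n, ∃ V : Set (E n), IsOpen V ∧ S = f n ⁻¹' V) →
          @IsOpen M tM (F '' S) := by
  classical
  set G : X → ∀ n, E n := fun x n => f n x with hG
  have hGc : Continuous G := continuous_pi fun n => hf n
  have hGinj : Function.Injective G := fun a b h => hinj (congrFun h 0)
  haveI : TopologicalSpace.MetrizableSpace ↥(Set.range G) := by
    haveI : TopologicalSpace.MetrizableSpace (∀ n, E n) := by
      letI : ∀ n, MetricSpace (E n) := fun n => TopologicalSpace.metrizableSpaceMetric (E n)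
      exact inferInstance
    exact TopologicalSpace.MetrizableSpace.subtype _
  refine ⟨Set.range G, inferInstance, inferInstance, fun x => ⟨G x, Set.mem_range_self x⟩,
    hGc.subtype_mk _, fun a b h => hGinj (congrArg Subtype.val h), ?_⟩
  rintro S ⟨n, V, hV, rfl⟩
  have key : (fun x => (⟨G x, Set.mem_range_self x⟩ : Set.range G)) '' (f n ⁻¹' V)
      = Subtype.val ⁻¹' ((fun p : ∀ k, E k => p n) ⁻¹' V) := by
    ext m
    constructor
    · rintro ⟨x, hx, rfl⟩; exact hx
    · intro hm
      obtain ⟨x, hx⟩ := m.2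
      refine ⟨x, ?_, Subtype.ext hx⟩
      show f n x ∈ V
      have h1 : (m : ∀ k, E k) n ∈ V := hm
      rw [← hx] at h1
      exact h1
  rw [key]
  exact ((hV.preimage (continuous_apply n)).preimage continuous_subtype_val)

theorem stmt2 {X : Type u} [tX : TopologicalSpace X] (hX : Submetrizable tX)
    (𝓤 : ℕ → Set (Set X))
    (hdisc : ∀ n, DiscreteSetFamily tX (𝓤 n))
    (hcoz : ∀ n, ∀ U ∈ 𝓤 n, IsCozero U) :
    ∃ (M : Type u) (tM : TopologicalSpace M), @TopologicalSpace.MetrizableSpace M tM ∧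
      ∃ f : X → M, @Continuous X M tX tM f ∧ Function.Injective f ∧
        ∀ U ∈ ⋃ n, 𝓤 n, @IsOpen M tM (f '' U) := by
  classical
  obtain ⟨σ, hσle, hσm⟩ := hX
  have hC : ∃ tC : TopologicalSpace (SubmetCopy X),
      @TopologicalSpace.MetrizableSpace (SubmetCopy X) tC ∧
      @Continuous X (SubmetCopy X) tX tC SubmetCopy.mk := by
    have hinjval : Function.Injective (SubmetCopy.val (X := X)) := by
      intro a b h; cases a; cases b; cases h; rfl
    refine ⟨TopologicalSpace.induced SubmetCopy.val σ, ?_, ?_⟩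
    · exact @Topology.IsEmbedding.metrizableSpace (SubmetCopy X) X
        (TopologicalSpace.induced SubmetCopy.val σ) σ hσm SubmetCopy.val
        (@Topology.IsEmbedding.induced (SubmetCopy X) X SubmetCopy.val σ hinjval)
    · rw [continuous_def]
      intro V hV
      obtain ⟨U, hU, rfl⟩ := isOpen_induced_iff.1 hV
      exact hσle U hU
  obtain ⟨tC, htCm, hcopy⟩ := hC
  clear hσle hσm σ
  letI : TopologicalSpace (SubmetCopy X) := tC
  haveI : TopologicalSpace.MetrizableSpace (SubmetCopy X) := htCm
  -- choose cozero functions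
  set g : Set X → X → ℝ := fun U => if h : IsCozero U then h.choose else fun _ => 0 with hgdef
  have hgspec : ∀ U : Set X, IsCozero U →
      Continuous (g U) ∧ range (g U) ⊆ Icc 0 1 ∧ U = g U ⁻¹' Ioc 0 1 := by
    intro U h
    simp only [hgdef, dif_pos h]
    exact h.choose_spec
  have hmem01 : ∀ U : Set X, IsCozero U → ∀ x, g U x ∈ Icc (0:ℝ) 1 := by
    intro U h x
    exact (hgspec U h).2.1 ⟨x, rfl⟩
  have hzero : ∀ U : Set X, IsCozero U → ∀ x, x ∉ U → g U x = 0 := by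
    intro U h x hx
    by_contra hne
    have h0 : 0 < g U x := lt_of_le_of_ne (hmem01 U h x).1 (Ne.symm hne)
    exact hx ((hgspec U h).2.2 ▸ (mem_preimage.2 ⟨h0, (hmem01 U h x).2⟩))
  have hposiff : ∀ U : Set X, IsCozero U → ∀ x, x ∈ U ↔ 0 < g U x := by
    intro U h x
    constructor
    · intro hx
      have := (hgspec U h).2.2 ▸ hx
      exact (mem_preimage.1 this).1
    · intro h0
      rw [(hgspec U h).2.2]
      exact ⟨h0, (hmem01 U h x).2⟩
  letI : ∀ n : ℕ, TopologicalSpace ↥(𝓤 n) := fun _ => ⊥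
  haveI : ∀ n : ℕ, DiscreteTopology ↥(𝓤 n) := fun _ => ⟨rfl⟩
  -- the bounded-function hedgehog maps
  have hcozU : ∀ n, ∀ U : ↥(𝓤 n), IsCozero (U : Set X) := fun n U => hcoz n U U.2
  set Φ : ∀ n : ℕ, X → BoundedContinuousFunction ↥(𝓤 n) ℝ := fun n x =>
    BoundedContinuousFunction.mkOfBound
      ⟨fun U => g (U : Set X) x, continuous_of_discreteTopology⟩ 1
      (fun U V => Real.dist_le_of_mem_Icc_01 (hmem01 _ (hcozU n U) x)
        (hmem01 _ (hcozU n V) x)) with hΦdef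
  have hΦapp : ∀ n x (U : ↥(𝓤 n)), Φ n x U = g (U : Set X) x := fun _ _ _ => rfl
  have hΦc : ∀ n, Continuous (Φ n) := by
    intro n
    rw [continuous_iff_continuousAt]
    intro x
    rw [ContinuousAt, Metric.tendsto_nhds]
    intro ε hε
    obtain ⟨W, hW, hsub⟩ := hdisc n x
    have hxW : x ∈ W := mem_of_mem_nhds hW
    by_cases hS : ∃ U₀ ∈ 𝓤 n, (U₀ ∩ W).Nonempty
    · obtain ⟨U₀, hU₀, hne⟩ := hS
      have hc : Continuous (g U₀) := (hgspec U₀ (hcoz n U₀ hU₀)).1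
      have hev : ∀ᶠ y in @nhds X tX x, dist (g U₀ y) (g U₀ x) < ε / 2 :=
        Metric.tendsto_nhds.1 (hc.continuousAt) (ε / 2) (by linarith)
      filter_upwards [hW, hev] with y hyW hyd
      have hle : dist (Φ n y) (Φ n x) ≤ ε / 2 := by
        rw [BoundedContinuousFunction.dist_le (by linarith)]
        intro U
        by_cases hUW : ((U : Set X) ∩ W).Nonempty
        · have : (U : Set X) = U₀ := hsub ⟨U.2, hUW⟩ ⟨hU₀, hne⟩
          rw [hΦapp, hΦapp, this]
          exact le_of_lt hyd
        · have hy0 : g (U : Set X) y = 0 := by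
            apply hzero _ (hcozU n U)
            intro hy
            exact hUW ⟨y, hy, hyW⟩
          have hx0 : g (U : Set X) x = 0 := by
            apply hzero _ (hcozU n U)
            intro hx
            exact hUW ⟨x, hx, hxW⟩
          rw [hΦapp, hΦapp, hy0, hx0]
          simpa using (by linarith : (0:ℝ) ≤ ε / 2)
      linarith [hle]
    · push_neg at hS
      filter_upwards [hW] with y hyW
      have hle : dist (Φ n y) (Φ n x) ≤ 0 := by
        rw [BoundedContinuousFunction.dist_le le_rfl]
        intro U
        have hy0 : g (U : Set X) y = 0 := by
          apply hzero _ (hcozU n U)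
          intro hy
          have hmem : y ∈ ((U : Set X) ∩ W) := ⟨hy, hyW⟩
          rw [hS (U : Set X) U.2] at hmem
          exact hmem
        have hx0 : g (U : Set X) x = 0 := by
          apply hzero _ (hcozU n U)
          intro hx
          have hmem : x ∈ ((U : Set X) ∩ W) := ⟨hx, hxW⟩
          rw [hS (U : Set X) U.2] at hmem
          exact hmem
        rw [hΦapp, hΦapp, hy0, hx0]
        simp
      linarith [hle]
  -- assemble the maps
  set E : ℕ → Type u := fun n => SubmetCopy X × BoundedContinuousFunction ↥(𝓤 n) ℝ with hEdef
  set f : ∀ n, X → E n := fun n x => (SubmetCopy.mk x, Φ n x) with hfdef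
  haveI : ∀ n, TopologicalSpace.MetrizableSpace (E n) := fun n => inferInstance
  have hfc : ∀ n, Continuous (f n) := fun n => Continuous.prodMk hcopy (hΦc n)
  have hfinj : Function.Injective (f 0) := fun a b h =>
    congrArg (fun p : E 0 => p.1.val) h
  obtain ⟨M, tM, hM, F, hFc, hFi, hopen⟩ := aux_embed E f hfc hfinj
  refine ⟨M, tM, hM, F, hFc, hFi, ?_⟩
  intro U hU
  obtain ⟨n, hUn⟩ := mem_iUnion.1 hU
  apply hopen
  refine ⟨n, (univ : Set (SubmetCopy X)) ×ˢ
    {h : BoundedContinuousFunction ↥(𝓤 n) ℝ | 0 < h ⟨U, hUn⟩}, ?_, ?_⟩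
  · exact isOpen_univ.prod
      (isOpen_lt continuous_const (continuous_eval_const _))
  · ext x
    constructor
    · intro hx
      exact ⟨mem_univ _, (hposiff U (hcoz n U hUn) x).1 hx⟩
    · rintro ⟨-, h⟩
      exact (hposiff U (hcoz n U hUn) x).2 h
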